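/- arXiv:2009.03430 — 4 statements merged into one kernel-verified Lean document; each statement's English description precedes it below -/
import Mathlib

section
/- Let T be a tree on vertex set {1,…,n} (a connected acyclic simple graph with n vertices and hence n−1 edges). For ANY ordering e_1, …, e_{n−1} of the edges of T, the product of the corresponding transpositions (regarding each edge {a,b} as the transposition (a b)) is an n-cycle in S_n. -/
open Equiv SimpleGraph

/-- The transposition associated to an edge (an unordered pair) of a graph. -/
def edgeSwap {n : ℕ} : Sym2 (Fin n) → Equiv.Perm (Fin n) :=
  Sym2.lift ⟨fun a b => Equiv.swap a b, fun a b => Equiv.swap_comm a b⟩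

/-- General version of `edgeSwap`. -/
def swE {α : Type*} [DecidableEq α] : Sym2 α → Equiv.Perm α :=
  Sym2.lift ⟨fun a b => Equiv.swap a b, fun a b => Equiv.swap_comm a b⟩

lemma swE_mk {α : Type*} [DecidableEq α] (a b : α) : swE s(a, b) = Equiv.swap a b := rfl

lemma swE_fix {α : Type*} [DecidableEq α] (e : Sym2 α) {x : α} (hx : x ∉ e) : swE e x = x := by
  induction e using Sym2.ind with
  | _ a b =>
    rw [swE_mk]
    exact Equiv.swap_apply_of_ne_of_ne (fun h => hx (by simp [h])) (fun h => hx (by simp [h]))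

lemma prodSw_fix {α : Type*} [DecidableEq α] (L : List (Sym2 α)) {x : α}
    (hx : ∀ e ∈ L, x ∉ e) : (L.map swE).prod x = x := by
  induction L with
  | nil => simp
  | cons e L ih =>
    simp only [List.map_cons, List.prod_cons, Equiv.Perm.mul_apply]
    rw [ih (fun e' he' => hx e' (List.mem_cons_of_mem _ he')),
      swE_fix e (hx e List.mem_cons_self)]

lemma cycle_mul_swap {α : Type*} [DecidableEq α] [Finite α] {σ : Equiv.Perm α} {a b : α}
    (hσ : σ.IsCycle) (ha : σ a ≠ a) (hb : σ b = b) :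
    (σ * Equiv.swap a b).IsCycle ∧ ∀ x, (σ * Equiv.swap a b) x ≠ x ↔ (σ x ≠ x ∨ x = b) := by
  classical
  cases nonempty_fintype α
  have hab : a ≠ b := fun h => ha (by rw [h, hb])
  set τ := σ * Equiv.swap a b with hτ
  have τa : τ a = b := by simp [hτ, Equiv.Perm.mul_apply, Equiv.swap_apply_left, hb]
  have τb : τ b = σ a := by simp [hτ, Equiv.Perm.mul_apply, Equiv.swap_apply_right]
  have τo : ∀ x, x ≠ a → x ≠ b → τ x = σ x := fun x hxa hxb => by
    simp [hτ, Equiv.Perm.mul_apply, Equiv.swap_apply_of_ne_of_ne hxa hxb]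
  have hσab : σ a ≠ b := fun h => hab (σ.injective (by rw [h, hb]))
  have key : ∀ m : ℕ, τ.SameCycle a ((σ ^ m) a) := by
    intro m
    induction m with
    | zero => exact Equiv.Perm.SameCycle.refl _ _
    | succ m ih =>
      have hz : σ ((σ ^ m) a) ≠ (σ ^ m) a := by
        have h1 : (σ ^ m) a ∈ σ.support := by
          rw [Equiv.Perm.pow_apply_mem_support]
          exact Equiv.Perm.mem_support.2 ha
        exact Equiv.Perm.mem_support.1 h1
      have hzb : (σ ^ m) a ≠ b := fun h => hz (by rw [h, hb])
      rw [pow_succ', Equiv.Perm.mul_apply]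
      rcases eq_or_ne ((σ ^ m) a) a with hza | hza
      · rw [hza]
        refine ⟨2, ?_⟩
        rw [show (2 : ℤ) = ((2 : ℕ) : ℤ) from rfl, zpow_natCast, pow_two,
          Equiv.Perm.mul_apply, τa, τb]
      · have : τ ((σ ^ m) a) = σ ((σ ^ m) a) := τo _ hza hzb
        exact ih.trans ⟨1, by simpa using this⟩
  constructor
  · refine ⟨a, by rw [τa]; exact hab.symm, fun y hy => ?_⟩
    rcases eq_or_ne y a with rfl | hya
    · exact Equiv.Perm.SameCycle.refl _ _
    rcases eq_or_ne y b with rfl | hyb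
    · exact ⟨1, by simpa using τa⟩
    · have hσy : σ y ≠ y := by rwa [τo y hya hyb] at hy
      obtain ⟨m, hm⟩ := hσ.exists_pow_eq ha hσy
      exact hm ▸ key m
  · intro x
    rcases eq_or_ne x a with rfl | hxa
    · simp [τa, hab.symm, ha]
    rcases eq_or_ne x b with rfl | hxb
    · simp [τb, hσab]
    · rw [τo x hxa hxb]
      simp [hxb]


lemma firstEdge {α : Type*} {G : SimpleGraph α} {v y : α} (d : G.Walk v y) (h : v ≠ y) :
    ∃ c, G.Adj v c ∧ s(v, c) ∈ d.edges := by
  cases d with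
  | nil => exact absurd rfl h
  | cons h' d' => exact ⟨_, h', by simp⟩

lemma exists_leaf {α : Type*} [Fintype α] [DecidableEq α] {G : SimpleGraph α}
    (hG : G.IsAcyclic) {x₀ y₀ : α} (h₀ : G.Adj x₀ y₀) :
    ∃ v u, G.Adj v u ∧ ∀ w, G.Adj v w → w = u := by
  classical
  set S : Set ℕ := {k : ℕ | ∃ (x y : α) (p : G.Walk x y), p.IsPath ∧ p.length = k} with hS
  have h1 : 1 ∈ S := by
    refine ⟨x₀, y₀, Walk.cons h₀ Walk.nil, ?_, rfl⟩
    rw [Walk.cons_isPath_iff]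
    exact ⟨Walk.IsPath.nil, by simp [h₀.ne]⟩
  have hbdd : BddAbove S := by
    refine ⟨Fintype.card α, fun k hk => ?_⟩
    obtain ⟨x, y, p, hp, hl⟩ := hk
    exact hl ▸ le_of_lt hp.length_lt
  have hmem : sSup S ∈ S := Nat.sSup_mem ⟨1, h1⟩ hbdd
  obtain ⟨x, y, p, hp, hl⟩ := hmem
  cases p with
  | nil =>
    exfalso
    have : (1 : ℕ) ≤ sSup S := le_csSup hbdd h1
    rw [Walk.length_nil] at hl
    omega
  | @cons _ u _ hxu q =>
    rw [Walk.cons_isPath_iff] at hp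
    obtain ⟨hq, hxq⟩ := hp
    refine ⟨x, u, hxu, fun w hw => ?_⟩
    by_contra hwu
    have hxw_ne : s(x, w) ∉ (Walk.cons hxu q).edges := by
      simp only [Walk.edges_cons, List.mem_cons]
      rintro (h | h)
      · rw [Sym2.eq_iff] at h
        rcases h with ⟨-, h⟩ | ⟨-, h⟩
        · exact hwu h
        · exact hw.ne h.symm
      · exact hxq (Walk.fst_mem_support_of_mem_edges q h)
    by_cases hws : w ∈ (Walk.cons hxu q).support
    · set q' := (Walk.cons hxu q).takeUntil w hws with hq'
      have hq'p : q'.IsPath := (Walk.cons_isPath_iff hxu q).2 ⟨hq, hxq⟩ |>.takeUntil hws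
      have hcyc : (Walk.cons hw q'.reverse).IsCycle := by
        rw [Walk.cons_isCycle_iff]
        constructor
        · exact hq'p.reverse
        · rw [Walk.edges_reverse, List.mem_reverse]
          exact fun hmem => hxw_ne (Walk.edges_takeUntil_subset _ hws hmem)
      exact hG _ hcyc
    · have hp' : (Walk.cons hw.symm (Walk.cons hxu q)).IsPath := by
        rw [Walk.cons_isPath_iff]
        exact ⟨(Walk.cons_isPath_iff hxu q).2 ⟨hq, hxq⟩, hws⟩
      have : (Walk.cons hw.symm (Walk.cons hxu q)).length ∈ S :=
        ⟨_, _, _, hp', rfl⟩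
      have hle : (Walk.cons hw.symm (Walk.cons hxu q)).length ≤ sSup S := le_csSup hbdd this
      rw [Walk.length_cons] at hl
      simp only [Walk.length_cons] at hle
      omega

lemma path_avoids {α : Type*} [DecidableEq α] {G : SimpleGraph α} {v u : α}
    (huniq : ∀ w, G.Adj v w → w = u)
    {x y : α} (p : G.Walk x y) (hp : p.IsPath) (hx : x ≠ v) (hy : y ≠ v) : v ∉ p.support := by
  intro hv
  have hspec := p.take_spec hv
  have ht : (p.takeUntil v hv).IsPath := hp.takeUntil hv
  have hd : (p.dropUntil v hv).IsPath := hp.dropUntil hv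
  obtain ⟨c₁, hc₁, he₁⟩ := firstEdge (p.dropUntil v hv) (Ne.symm hy)
  obtain ⟨c₂, hc₂, he₂⟩ := firstEdge (p.takeUntil v hv).reverse (Ne.symm hx)
  rw [Walk.edges_reverse, List.mem_reverse] at he₂
  rw [huniq _ hc₁] at he₁
  rw [huniq _ hc₂] at he₂
  have hnd : p.edges.Nodup := hp.edges_nodup
  rw [← hspec, Walk.edges_append] at hnd
  exact (List.disjoint_of_nodup_append hnd) he₂ he₁

lemma aux {α : Type*} [Fintype α] [DecidableEq α] (N : ℕ) :
    ∀ L : List (Sym2 α), L.length ≤ N → L ≠ [] → L.Nodup → (∀ e ∈ L, ¬ e.IsDiag) →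
    (SimpleGraph.fromEdgeSet {e | e ∈ L}).IsAcyclic →
    (∀ x y : α, (∃ e ∈ L, x ∈ e) → (∃ e ∈ L, y ∈ e) →
      (SimpleGraph.fromEdgeSet {e | e ∈ L}).Reachable x y) →
    ((L.map swE).prod).IsCycle ∧ ∀ x : α, ((L.map swE).prod) x ≠ x ↔ ∃ e ∈ L, x ∈ e := by
  induction N with
  | zero =>
    intro L hlen hne
    cases L with
    | nil => exact absurd rfl hne
    | cons a l => simp at hlen
  | succ N ih =>
    intro L hlen hne hnd hdiag hacyc hconn
    obtain ⟨e₀, he₀⟩ := List.exists_mem_of_ne_nil L hne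
    induction e₀ using Sym2.ind with
    | _ x₀ y₀ =>
    have hadj₀ : (SimpleGraph.fromEdgeSet {e | e ∈ L}).Adj x₀ y₀ := by
      rw [SimpleGraph.fromEdgeSet_adj]
      exact ⟨he₀, fun h => hdiag _ he₀ (Sym2.mk_isDiag_iff.2 h)⟩
    obtain ⟨v, u, hvu, huniq⟩ := exists_leaf hacyc hadj₀
    have huv_ne : v ≠ u := hvu.ne
    have hvuL : s(v, u) ∈ L := ((SimpleGraph.fromEdgeSet_adj _).1 hvu).1
    have huniq' : ∀ e ∈ L, v ∈ e → e = s(v, u) := by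
      intro e he hve
      induction e using Sym2.ind with
      | _ a b =>
      have hab : a ≠ b := fun h => hdiag _ he (Sym2.mk_isDiag_iff.2 h)
      rcases Sym2.mem_iff.1 hve with rfl | rfl
      · have hadj : (SimpleGraph.fromEdgeSet {e | e ∈ L}).Adj v b :=
          (SimpleGraph.fromEdgeSet_adj _).2 ⟨he, hab⟩
        rw [huniq _ hadj]
      · have hadj : (SimpleGraph.fromEdgeSet {e | e ∈ L}).Adj v a :=
          ((SimpleGraph.fromEdgeSet_adj _).2 ⟨(by rwa [Sym2.eq_swap] at he), fun h => hab h.symm⟩)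
        rw [huniq _ hadj, Sym2.eq_swap]
    obtain ⟨A, B, rfl⟩ := List.append_of_mem hvuL
    rw [List.nodup_middle, List.nodup_cons] at hnd
    obtain ⟨hmidnd, hnd'⟩ := hnd
    have hmid : ∀ e : Sym2 α, e ∈ A ++ B → e ∈ A ++ s(v, u) :: B := by
      intro e he
      simp only [List.mem_append, List.mem_cons] at he ⊢
      tauto
    have hvuLmem : s(v, u) ∈ A ++ s(v, u) :: B := by simp
    by_cases hL' : A ++ B = []
    · obtain ⟨rfl, rfl⟩ := List.append_eq_nil_iff.1 hL'
      simp only [List.nil_append, List.map_cons, List.map_nil, List.prod_cons, List.prod_nil,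
        mul_one, swE_mk]
      refine ⟨Equiv.Perm.isCycle_swap huv_ne, fun x => ?_⟩
      rw [Equiv.swap_apply_ne_self_iff]
      simp [huv_ne, Sym2.mem_iff]
    · -- inductive case
      have hvnot : ∀ e ∈ A ++ B, v ∉ e := by
        intro e he hv
        exact hmidnd (huniq' e (hmid e he) hv ▸ he)
      have hvL' : ¬ ∃ e ∈ A ++ B, v ∈ e := by
        rintro ⟨e, he, hv⟩
        exact hvnot e he hv
      have hsub : {e : Sym2 α | e ∈ A ++ B} ⊆ {e : Sym2 α | e ∈ A ++ s(v, u) :: B} :=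
        fun e he => hmid e he
      have hle : SimpleGraph.fromEdgeSet {e : Sym2 α | e ∈ A ++ B}
          ≤ SimpleGraph.fromEdgeSet {e : Sym2 α | e ∈ A ++ s(v, u) :: B} :=
        SimpleGraph.fromEdgeSet_mono hsub
      have hacyc' : (SimpleGraph.fromEdgeSet {e : Sym2 α | e ∈ A ++ B}).IsAcyclic := by
        intro w c hc
        exact hacyc _ (hc.transfer fun e' he' =>
          SimpleGraph.edgeSet_mono hle (c.edges_subset_edgeSet he'))
      have notv : ∀ {x y : α} (p : (SimpleGraph.fromEdgeSet
          {e : Sym2 α | e ∈ A ++ s(v, u) :: B}).Walk x y),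
          p.IsPath → x ≠ v → y ≠ v → v ∉ p.support :=
        fun p hp hx hy => path_avoids (fun w hw => huniq w hw) p hp hx hy
      have reach' : ∀ x y : α, x ≠ v → y ≠ v →
          (SimpleGraph.fromEdgeSet {e : Sym2 α | e ∈ A ++ s(v, u) :: B}).Reachable x y →
          (SimpleGraph.fromEdgeSet {e : Sym2 α | e ∈ A ++ B}).Reachable x y := by
        intro x y hx hy hr
        obtain ⟨w⟩ := hr
        have hvp := notv w.toPath.1 w.toPath.2 hx hy
        refine ⟨Walk.transfer w.toPath.1 _ fun e hep => ?_⟩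
        have heG := Walk.edges_subset_edgeSet _ hep
        rw [SimpleGraph.edgeSet_fromEdgeSet] at heG ⊢
        refine ⟨?_, heG.2⟩
        have hne' : e ≠ s(v, u) := by
          rintro rfl
          exact hvp (Walk.fst_mem_support_of_mem_edges _ hep)
        have heL : e ∈ A ++ s(v, u) :: B := heG.1
        simp only [List.mem_append, List.mem_cons] at heL ⊢
        tauto
      have hconn' : ∀ x y : α, (∃ e ∈ A ++ B, x ∈ e) → (∃ e ∈ A ++ B, y ∈ e) →
          (SimpleGraph.fromEdgeSet {e : Sym2 α | e ∈ A ++ B}).Reachable x y := by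
        rintro x y ⟨ex, hex, hxe⟩ ⟨ey, hey, hye⟩
        have hxv : x ≠ v := fun h => hvnot ex hex (h ▸ hxe)
        have hyv : y ≠ v := fun h => hvnot ey hey (h ▸ hye)
        exact reach' x y hxv hyv (hconn x y ⟨ex, hmid ex hex, hxe⟩ ⟨ey, hmid ey hey, hye⟩)
      have hlen' : (A ++ B).length ≤ N := by
        simp only [List.length_append, List.length_cons] at hlen ⊢
        omega
      have hdiag' : ∀ e ∈ A ++ B, ¬ e.IsDiag := fun e he => hdiag e (hmid e he)
      obtain ⟨hcyc', hsupp'⟩ := ih (A ++ B) hlen' hL' hnd' hdiag' hacyc' hconn'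
      -- u is touched by A ++ B
      have htu : ∃ e ∈ A ++ B, u ∈ e := by
        by_contra hu
        push_neg at hu
        have huniq_u : ∀ w, (SimpleGraph.fromEdgeSet
            {e : Sym2 α | e ∈ A ++ s(v, u) :: B}).Adj u w → w = v := by
          intro w hw
          have hwL : s(u, w) ∈ A ++ s(v, u) :: B := ((SimpleGraph.fromEdgeSet_adj _).1 hw).1
          by_cases h : s(u, w) = s(v, u)
          · rw [Sym2.eq_iff] at h
            rcases h with ⟨h1, h2⟩ | ⟨h1, h2⟩
            · exact absurd h1.symm hvu.ne
            · exact h2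
          · have hmem : s(u, w) ∈ A ++ B := by
              simp only [List.mem_append, List.mem_cons] at hwL ⊢
              tauto
            exact absurd (Sym2.mem_mk_left u w) (hu _ hmem)
        obtain ⟨e₁, he₁⟩ := List.exists_mem_of_ne_nil _ hL'
        set z := e₁.out.1 with hz
        have hze : z ∈ e₁ := e₁.out_fst_mem
        have hzv : z ≠ v := fun h => hvnot e₁ he₁ (h ▸ hze)
        have hzu : z ≠ u := fun h => hu e₁ he₁ (h ▸ hze)
        have hr : (SimpleGraph.fromEdgeSet
            {e : Sym2 α | e ∈ A ++ s(v, u) :: B}).Reachable u z :=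
          hconn u z ⟨s(v, u), hvuLmem, Sym2.mem_mk_right v u⟩ ⟨e₁, hmid e₁ he₁, hze⟩
        obtain ⟨w⟩ := hr
        have hvp := notv w.toPath.1 w.toPath.2 hvu.ne' hzv
        obtain ⟨c, hc, hce⟩ := firstEdge w.toPath.1 (fun h => hzu h.symm)
        rw [huniq_u c hc] at hce
        exact hvp (Walk.snd_mem_support_of_mem_edges _ hce)
      -- the product rewriting
      have hPBv : (B.map swE).prod v = v :=
        prodSw_fix B fun e he => hvnot e (List.mem_append_right A he)
      set PB := (B.map swE).prod with hPB
      set w' := PB⁻¹ u with hw'def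
      have hw' : PB w' = u := PB.apply_symm_apply u
      have hw'v : w' ≠ v := by
        intro h
        exact hvu.ne' (by rw [← hw', h, hPBv])
      set σ' := ((A ++ B).map swE).prod with hσ'
      have hσ'def : σ' = (A.map swE).prod * PB := by
        rw [hσ', List.map_append, List.prod_append]
      have hσ'v : σ' v = v := by
        by_contra hne0
        exact hvL' ((hsupp' v).1 hne0)
      have htw' : ∃ e ∈ A ++ B, w' ∈ e := by
        by_cases hwu : w' = u
        · exact hwu ▸ htu
        · have hPBw : PB w' ≠ w' := by
            rw [hw']
            exact fun h => hwu h.symm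
          by_contra hnt
          push_neg at hnt
          exact hPBw (prodSw_fix B fun e he => hnt e (List.mem_append_right A he))
      have hσ'w' : σ' w' ≠ w' := (hsupp' w').2 htw'
      have hprod : (((A ++ s(v, u) :: B).map swE).prod) = σ' * Equiv.swap w' v := by
        rw [List.map_append, List.prod_append, List.map_cons, List.prod_cons, swE_mk]
        have h2 : Equiv.swap (PB w') (PB v) = PB * Equiv.swap w' v * PB⁻¹ :=
          Equiv.swap_apply_apply PB w' v
        rw [hw', hPBv] at h2
        have h1 : Equiv.swap v u * PB = PB * Equiv.swap w' v := by
          rw [Equiv.swap_comm v u, h2]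
          simp [mul_assoc]
        rw [← hPB, h1, hσ'def, mul_assoc]
      obtain ⟨hcyc, hsupp⟩ := cycle_mul_swap hcyc' hσ'w' hσ'v
      rw [hprod]
      refine ⟨hcyc, fun x => ?_⟩
      rw [hsupp x]
      constructor
      · rintro (hx | rfl)
        · obtain ⟨e, he, hxe⟩ := (hsupp' x).1 hx
          exact ⟨e, hmid e he, hxe⟩
        · exact ⟨s(x, u), hvuLmem, Sym2.mem_mk_left x u⟩
      · rintro ⟨e, he, hxe⟩
        by_cases h : e = s(v, u)
        · subst h
          rcases Sym2.mem_iff.1 hxe with rfl | rfl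
          · exact Or.inr rfl
          · exact Or.inl ((hsupp' x).2 htu)
        · have hmem : e ∈ A ++ B := by
            simp only [List.mem_append, List.mem_cons] at he ⊢
            tauto
          exact Or.inl ((hsupp' x).2 ⟨e, hmem, hxe⟩)

theorem stmt7 {n : ℕ} (hn : 2 ≤ n) (T : SimpleGraph (Fin n)) (hT : T.IsTree)
    (L : List (Sym2 (Fin n))) (hnd : L.Nodup)
    (hedges : ∀ e : Sym2 (Fin n), e ∈ L ↔ e ∈ T.edgeSet) :
    ((L.map edgeSwap).prod).IsCycle ∧ ((L.map edgeSwap).prod).support.card = n := by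
  classical
  have hsw : L.map edgeSwap = L.map swE := rfl
  have hTset : {e : Sym2 (Fin n) | e ∈ L} = T.edgeSet := Set.ext fun e => hedges e
  have hdiag : ∀ e ∈ L, ¬ e.IsDiag := fun e he =>
    T.not_isDiag_of_mem_edgeSet ((hedges e).1 he)
  have hG : SimpleGraph.fromEdgeSet {e : Sym2 (Fin n) | e ∈ L} = T := by
    rw [hTset, SimpleGraph.fromEdgeSet_edgeSet]
  have hnt : Nontrivial (Fin n) := ⟨⟨⟨0, by omega⟩, ⟨1, by omega⟩, by simp [Fin.ext_iff]⟩⟩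
  have htouch : ∀ x : Fin n, ∃ e ∈ L, x ∈ e := by
    intro x
    obtain ⟨y, hy⟩ := exists_ne x
    obtain ⟨w⟩ := hT.1.preconnected x y
    obtain ⟨c, hc, _⟩ := firstEdge w (fun h => hy h.symm)
    exact ⟨s(x, c), (hedges _).2 ((SimpleGraph.mem_edgeSet T).2 hc), Sym2.mem_mk_left x c⟩
  have hne : L ≠ [] := by
    obtain ⟨e, he, -⟩ := htouch ⟨0, by omega⟩
    exact List.ne_nil_of_mem he
  have hacyc : (SimpleGraph.fromEdgeSet {e : Sym2 (Fin n) | e ∈ L}).IsAcyclic := by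
    rw [hG]; exact hT.2
  have hconn : ∀ x y : Fin n, (∃ e ∈ L, x ∈ e) → (∃ e ∈ L, y ∈ e) →
      (SimpleGraph.fromEdgeSet {e : Sym2 (Fin n) | e ∈ L}).Reachable x y := by
    intro x y _ _
    rw [hG]
    exact hT.1.preconnected x y
  obtain ⟨h1, h2⟩ := aux L.length L le_rfl hne hnd hdiag hacyc hconn
  rw [hsw]
  refine ⟨h1, ?_⟩
  have hu : ((L.map swE).prod).support = Finset.univ := by
    ext x
    simp only [Equiv.Perm.mem_support, Finset.mem_univ, iff_true]
    exact (h2 x).2 (htouch x)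
  rw [hu]
  simp
end

section
/- Let e_1, …, e_{n−1} be n−1 edges (2-element subsets) of {1,…,n} such that some ordering of the corresponding transpositions multiplies to an n-cycle. Then the graph on {1,…,n} with edge set {e_1, …, e_{n−1}} is a spanning tree of the complete graph K_n. -/
open SimpleGraph

/-- A connected graph on a finite vertex set has at least `card V - 1` edges. -/
theorem aux_card_le_edge {V : Type*} [Fintype V] (G : SimpleGraph V) [Fintype G.edgeSet]
    (h : G.Connected) : Fintype.card V ≤ G.edgeFinset.card + 1 := by
  classical
  haveI : Nonempty V := h.nonempty
  obtain ⟨v₀⟩ := h.nonempty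
  have hpar : ∀ w : V, w ≠ v₀ → ∃ p : V, G.Adj w p ∧ G.dist v₀ p < G.dist v₀ w := by
    intro w hw
    obtain ⟨q, hq⟩ := h.exists_walk_length_eq_dist w v₀
    cases q with
    | nil => exact absurd rfl hw
    | cons h' q' =>
      rename_i x
      refine ⟨x, h', ?_⟩
      have h1 : G.dist v₀ x ≤ q'.length := by
        rw [dist_comm]; exact G.dist_le q'
      have h2 : q'.length + 1 = G.dist w v₀ := by simpa using hq
      have h3 : G.dist v₀ w = G.dist w v₀ := SimpleGraph.dist_comm
      omega
  choose par hadj hlt using hpar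
  have hinj : ∀ w ∈ ({v₀}ᶜ : Finset V), ∀ w' ∈ ({v₀}ᶜ : Finset V),
      (fun w => if hw : w ≠ v₀ then s(w, par w hw) else s(w, w)) w =
      (fun w => if hw : w ≠ v₀ then s(w, par w hw) else s(w, w)) w' → w = w' := by
    intro w hw w' hw' heq
    rw [Finset.mem_compl, Finset.mem_singleton] at hw hw'
    simp only [dif_pos hw, dif_pos hw'] at heq
    rw [Sym2.eq_iff] at heq
    rcases heq with ⟨h1, _⟩ | ⟨h1, h2⟩
    · exact h1
    · exfalso
      have l1 := hlt w hw
      have l2 := hlt w' hw'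
      rw [h2] at l1
      rw [← h1] at l2
      omega
  have hmaps : ∀ w ∈ ({v₀}ᶜ : Finset V),
      (fun w => if hw : w ≠ v₀ then s(w, par w hw) else s(w, w)) w ∈ G.edgeFinset := by
    intro w hw
    rw [Finset.mem_compl, Finset.mem_singleton] at hw
    simp only [dif_pos hw]
    rw [mem_edgeFinset, mem_edgeSet]
    exact hadj w hw
  have hcard := Finset.card_le_card_of_injOn _ hmaps hinj
  have hcompl : ({v₀}ᶜ : Finset V).card = Fintype.card V - 1 := by
    rw [Finset.card_compl, Finset.card_singleton]
  have hpos : 1 ≤ Fintype.card V := Fintype.card_pos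
  omega

/-- If every `G`-adjacent pair is `G'`-reachable, then `G`-reachability implies
`G'`-reachability. -/
theorem aux_reach_transfer {V : Type*} {G G' : SimpleGraph V}
    (h : ∀ a b, G.Adj a b → G'.Reachable a b) {x y : V} (hr : G.Reachable x y) :
    G'.Reachable x y := by
  obtain ⟨p⟩ := hr
  induction p with
  | nil => exact Reachable.refl _
  | cons h' _ ih => exact (h _ _ h').trans ih

theorem stmt8 {n : ℕ} (e : Fin (n - 1) → Sym2 (Fin n))
    (hne : ∀ k, ¬ (e k).IsDiag)
    (hord : ∃ π : Equiv.Perm (Fin (n - 1)),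
      ((List.ofFn (fun k => edgeSwap (e (π k)))).prod).IsCycle ∧
      ((List.ofFn (fun k => edgeSwap (e (π k)))).prod).support.card = n) :
    (SimpleGraph.fromEdgeSet (Set.range e)).IsTree := by
  classical
  obtain ⟨π, hcyc, hcard⟩ := hord
  set σ : Equiv.Perm (Fin n) := (List.ofFn (fun k => edgeSwap (e (π k)))).prod with hσ
  set G : SimpleGraph (Fin n) := SimpleGraph.fromEdgeSet (Set.range e) with hG
  -- the vertex set is nonempty
  obtain ⟨x₀, hx₀, hsc⟩ := hcyc
  haveI : Nonempty (Fin n) := ⟨x₀⟩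
  have hn1 : 1 ≤ n := by
    have := x₀.isLt; omega
  -- edge set of G
  have hEdge : G.edgeSet = Set.range e := by
    rw [hG, SimpleGraph.edgeSet_fromEdgeSet]
    ext s
    simp only [Set.mem_diff, Set.mem_setOf_eq, Set.mem_range, and_iff_left_iff_imp]
    rintro ⟨k, rfl⟩
    exact hne k
  -- adjacency from membership in the range
  have hadjGen : ∀ a b : Fin n, s(a, b) ∈ Set.range e → G.Adj a b := by
    intro a b hs
    rw [← SimpleGraph.mem_edgeSet, hEdge]
    · exact hs
  -- each swap moves points to reachable points
  have key : ∀ l : List (Sym2 (Fin n)), (∀ s ∈ l, s ∈ Set.range e) →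
      ∀ v : Fin n, G.Reachable v ((l.map edgeSwap).prod v) := by
    intro l
    induction l with
    | nil => intro _ v; simpa using Reachable.refl v
    | cons s t ih =>
      intro hmem v
      rw [List.map_cons, List.prod_cons, Equiv.Perm.mul_apply]
      refine (ih (fun x hx => hmem x (List.mem_cons_of_mem _ hx)) v).trans ?_
      have hs : s ∈ Set.range e := hmem s List.mem_cons_self
      set w := ((t.map edgeSwap).prod) v with hw
      clear_value w
      revert hs
      refine Sym2.ind (fun a b hs => ?_) s
      have hab : a ≠ b := by
        obtain ⟨k, hk⟩ := hs
        intro hEq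
        apply hne k
        rw [hk, hEq]
        exact Sym2.mk_isDiag_iff.mpr rfl
      have hAdj : G.Adj a b := hadjGen a b hs
      have hes : edgeSwap s(a, b) = Equiv.swap a b := rfl
      rw [hes]
      rcases eq_or_ne w a with rfl | hwa
      · rw [Equiv.swap_apply_left]
        exact hAdj.reachable
      rcases eq_or_ne w b with rfl | hwb
      · rw [Equiv.swap_apply_right]
        exact hAdj.symm.reachable
      · rw [Equiv.swap_apply_of_ne_of_ne hwa hwb]
  have hstep : ∀ v : Fin n, G.Reachable v (σ v) := by
    intro v
    have h1 : (List.ofFn fun k => edgeSwap (e (π k))) =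
        (List.ofFn fun k => e (π k)).map edgeSwap := by
      rw [List.map_ofFn]
      rfl
    rw [hσ, h1]
    apply key
    intro s hs
    rw [List.mem_ofFn] at hs
    obtain ⟨k, rfl⟩ := hs
    exact Set.mem_range_self _
  have hpow : ∀ (k : ℕ) (v : Fin n), G.Reachable v ((σ ^ k) v) := by
    intro k
    induction k with
    | zero => intro v; simpa using Reachable.refl v
    | succ m ih =>
      intro v
      have : (σ ^ (m + 1)) v = σ ((σ ^ m) v) := by
        rw [pow_succ']
        rfl
      rw [this]
      exact (ih v).trans (hstep _)
  -- support of σ is everything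
  have hsupp : ∀ v : Fin n, σ v ≠ v := by
    intro v
    have : σ.support = Finset.univ := by
      apply Finset.eq_univ_of_card
      rw [hcard, Fintype.card_fin]
    have hv : v ∈ σ.support := this ▸ Finset.mem_univ v
    exact Equiv.Perm.mem_support.mp hv
  -- connectivity
  have hconn : G.Connected := by
    rw [SimpleGraph.connected_iff]
    refine ⟨fun v w => ?_, ‹Nonempty (Fin n)›⟩
    have hcyc' : σ.IsCycle := ⟨x₀, hx₀, hsc⟩
    obtain ⟨k, hk⟩ := hcyc'.exists_pow_eq (hsupp v) (hsupp w)
    rw [← hk]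
    exact hpow k v
  -- edge count bound
  haveI : Fintype G.edgeSet := Fintype.ofFinite _
  have hEcard : G.edgeFinset.card ≤ n - 1 := by
    rw [SimpleGraph.edgeFinset_card]
    have h1 : Fintype.card G.edgeSet = Fintype.card (Set.range e) :=
      Fintype.card_congr (Equiv.setCongr hEdge)
    have h2 : Fintype.card (Set.range e) ≤ Fintype.card (Fin (n - 1)) :=
      Fintype.card_le_of_surjective (Set.rangeFactorization e) Set.rangeFactorization_surjective
    rw [Fintype.card_fin] at h2
    omega
  -- acyclicity
  have hacyc : G.IsAcyclic := by
    intro v c hc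
    have hlen := hc.three_le_length
    have hne' : c.edges ≠ [] := by
      intro hnil
      rw [← SimpleGraph.Walk.length_edges, hnil] at hlen
      simp at hlen
    obtain ⟨e₀, he₀⟩ := List.exists_mem_of_ne_nil _ hne'
    have hex : ∃ a b : Fin n, s(a, b) ∈ c.edges :=
      Sym2.ind (fun a b h => ⟨a, b, h⟩) e₀ he₀
    obtain ⟨a, b, hab⟩ := hex
    have hrd : G.Adj a b ∧ (G \ SimpleGraph.fromEdgeSet {s(a, b)}).Reachable a b :=
      SimpleGraph.adj_and_reachable_delete_edges_iff_exists_cycle.mpr ⟨v, c, hc, hab⟩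
    set G' : SimpleGraph (Fin n) := G \ SimpleGraph.fromEdgeSet {s(a, b)} with hG'
    have hle : G' ≤ G := sdiff_le
    have hGconn' : G'.Connected := by
      rw [SimpleGraph.connected_iff]
      refine ⟨fun x y => ?_, ‹Nonempty (Fin n)›⟩
      refine aux_reach_transfer (fun p q hpq => ?_) (hconn.preconnected x y)
      by_cases hpq' : s(p, q) = s(a, b)
      · rw [Sym2.eq_iff] at hpq'
        rcases hpq' with ⟨rfl, rfl⟩ | ⟨rfl, rfl⟩
        · exact hrd.2
        · exact hrd.2.symm
      · have : G'.Adj p q := by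
          rw [hG', SimpleGraph.sdiff_adj]
          refine ⟨hpq, ?_⟩
          rw [SimpleGraph.fromEdgeSet_adj]
          rintro ⟨h1, -⟩
          exact hpq' h1
        exact this.reachable
    haveI : Fintype G'.edgeSet := Fintype.ofFinite _
    have hsub : G'.edgeFinset ⊂ G.edgeFinset := by
      refine ⟨SimpleGraph.edgeFinset_mono hle, fun hsub' => ?_⟩
      have h1 : s(a, b) ∈ G.edgeFinset := by
        rw [SimpleGraph.mem_edgeFinset, SimpleGraph.mem_edgeSet]
        exact hrd.1
      have h2 := hsub' h1
      rw [SimpleGraph.mem_edgeFinset, SimpleGraph.mem_edgeSet, hG',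
        SimpleGraph.sdiff_adj] at h2
      apply h2.2
      rw [SimpleGraph.fromEdgeSet_adj]
      exact ⟨rfl, hrd.1.ne⟩
    have hlt := Finset.card_lt_card hsub
    have hbound := aux_card_le_edge G' hGconn'
    rw [Fintype.card_fin] at hbound
    omega
  exact ⟨hconn, hacyc⟩
end

section
/- Let Γ be a subset of the standard basis {Ω_ij : 1 ≤ i < j ≤ n} of so(n), and let G be the simple graph on vertices {1,…,n} with an edge {i,j} for each Ω_ij ∈ Γ. Then the Lie algebra generated by Γ equals so(n) if and only if G is connected. -/
open Matrix
attribute [local instance 100] LieRing.ofAssociativeRing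

/-- The standard basis element `Ω i j = E i j - E j i` of `so(n)`. -/
def Omega {n : ℕ} (i j : Fin n) : Matrix (Fin n) (Fin n) ℝ :=
  Matrix.single i j 1 - Matrix.single j i 1

lemma Omega_symm {n : ℕ} (i j : Fin n) : Omega j i = -Omega i j := by
  simp [Omega, neg_sub]

lemma Omega_self {n : ℕ} (i : Fin n) : Omega i i = 0 := by
  simp [Omega]

lemma Omega_transpose {n : ℕ} (i j : Fin n) : (Omega i j)ᵀ = -(Omega i j) := by
  ext k l
  simp only [Omega, transpose_apply, Matrix.neg_apply, Matrix.sub_apply, single, of_apply, neg_sub]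
  have h1 : (i = l ∧ j = k) ↔ (j = k ∧ i = l) := and_comm
  have h2 : (j = l ∧ i = k) ↔ (i = k ∧ j = l) := and_comm
  rw [if_congr h1 rfl rfl, if_congr h2 rfl rfl]

lemma Omega_apply {n : ℕ} (i j k l : Fin n) :
    Omega i j k l = (if i = k ∧ j = l then (1:ℝ) else 0) - (if j = k ∧ i = l then 1 else 0) := by
  simp [Omega, single, Matrix.sub_apply]

lemma Omega_bracket {n : ℕ} {i j k : Fin n} (hij : i ≠ j) (hjk : j ≠ k) (hik : i ≠ k) :
    ⁅Omega i j, Omega j k⁆ = Omega i k := by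
  have e1 := Matrix.single_mul_single_same (c := (1:ℝ)) i j k 1
  have e2 := (Matrix.single_mul_single_of_ne (1:ℝ) i j k hjk (1:ℝ) : Matrix.single i j (1:ℝ) * Matrix.single k j (1:ℝ) = 0)
  have e3 := (Matrix.single_mul_single_of_ne (1:ℝ) j i j hij (1:ℝ) : Matrix.single j i (1:ℝ) * Matrix.single j k (1:ℝ) = 0)
  have e4 := (Matrix.single_mul_single_of_ne (1:ℝ) j i k hik (1:ℝ) : Matrix.single j i (1:ℝ) * Matrix.single k j (1:ℝ) = 0)
  have e5 := (Matrix.single_mul_single_of_ne (1:ℝ) j k i (Ne.symm hik) (1:ℝ) : Matrix.single j k (1:ℝ) * Matrix.single i j (1:ℝ) = 0)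
  have e6 := (Matrix.single_mul_single_of_ne (1:ℝ) j k j (Ne.symm hjk) (1:ℝ) : Matrix.single j k (1:ℝ) * Matrix.single j i (1:ℝ) = 0)
  have e7 := (Matrix.single_mul_single_of_ne (1:ℝ) k j i (Ne.symm hij) (1:ℝ) : Matrix.single k j (1:ℝ) * Matrix.single i j (1:ℝ) = 0)
  have e8 := Matrix.single_mul_single_same (c := (1:ℝ)) k j i 1
  simp only [Ring.lie_def, Omega, sub_mul, mul_sub, e1, e2, e3, e4, e5, e6, e7, e8, one_mul]
  abel

lemma sum_ite_double {n : ℕ} (g : Fin n → Fin n → ℝ) (k l : Fin n) :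
    (∑ i : Fin n, ∑ j : Fin n, if i = k ∧ j = l then g i j else 0) = g k l := by
  simp [ite_and, Finset.sum_ite_eq']

/-- The skew-symmetric matrices as a Lie subalgebra. -/
def skewLie (n : ℕ) : LieSubalgebra ℝ (Matrix (Fin n) (Fin n) ℝ) where
  carrier := {A | Aᵀ = -A}
  add_mem' := by
    intro a b ha hb
    simp only [Set.mem_setOf_eq] at *
    rw [transpose_add, ha, hb, neg_add]
  zero_mem' := by simp
  smul_mem' := by
    intro c a ha
    simp only [Set.mem_setOf_eq] at *
    rw [transpose_smul, ha, smul_neg]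
  lie_mem' := by
    intro x y hx hy
    simp only [Set.mem_setOf_eq] at *
    rw [Ring.lie_def, transpose_sub, transpose_mul, transpose_mul, hx, hy]
    noncomm_ring

lemma skew_eq_sum {n : ℕ} (A : Matrix (Fin n) (Fin n) ℝ) (h : Aᵀ = -A) :
    A = ∑ i : Fin n, ∑ j : Fin n, (A i j / 2) • Omega i j := by
  ext k l
  have hkl : A l k = -A k l := by
    have := congrFun (congrFun h k) l
    simpa [transpose_apply] using this
  simp only [Matrix.sum_apply, Matrix.smul_apply, smul_eq_mul, Omega_apply, mul_sub, mul_ite,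
    mul_one, mul_zero, Finset.sum_sub_distrib]
  rw [sum_ite_double (fun i j => A i j / 2) k l, Finset.sum_comm,
    sum_ite_double (fun j i => A i j / 2) k l]
  linarith [hkl]

/-- Matrices supported on the reachability classes of a graph, as a Lie subalgebra. -/
def supportLie {n : ℕ} (G : SimpleGraph (Fin n)) : LieSubalgebra ℝ (Matrix (Fin n) (Fin n) ℝ) where
  carrier := {A | ∀ k l : Fin n, ¬ G.Reachable k l → A k l = 0}
  add_mem' := by
    intro a b ha hb k l h
    simp only [Matrix.add_apply, ha k l h, hb k l h, add_zero]
  zero_mem' := by intro k l h; simp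
  smul_mem' := by
    intro c a ha k l h
    simp only [Matrix.smul_apply, ha k l h, smul_zero]
  lie_mem' := by
    intro x y hx hy k l h
    rw [Ring.lie_def, Matrix.sub_apply, Matrix.mul_apply, Matrix.mul_apply]
    have hz1 : ∀ m, x k m * y m l = 0 := by
      intro m
      by_cases hm : G.Reachable k m
      · have : ¬ G.Reachable m l := fun hr => h (hm.trans hr)
        rw [hy m l this, mul_zero]
      · rw [hx k m hm, zero_mul]
    have hz2 : ∀ m, y k m * x m l = 0 := by
      intro m
      by_cases hm : G.Reachable k m
      · have : ¬ G.Reachable m l := fun hr => h (hm.trans hr)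
        rw [hx m l this, mul_zero]
      · rw [hy k m hm, zero_mul]
    rw [Finset.sum_congr rfl (fun m _ => hz1 m), Finset.sum_congr rfl (fun m _ => hz2 m)]
    simp

lemma mem_of_walk {n : ℕ} {Γ : Set (Matrix (Fin n) (Fin n) ℝ)} {i j : Fin n}
    (w : (SimpleGraph.fromRel (fun a b : Fin n => Omega a b ∈ Γ)).Walk i j) :
    i ≠ j → Omega i j ∈ LieSubalgebra.lieSpan ℝ (Matrix (Fin n) (Fin n) ℝ) Γ := by
  induction w with
  | nil => exact fun h => absurd rfl h
  | @cons a b c hab w ih =>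
    intro hac
    obtain ⟨hne, hor⟩ := (SimpleGraph.fromRel_adj _ _ _).mp hab
    have hmem_ab : Omega a b ∈ LieSubalgebra.lieSpan ℝ (Matrix (Fin n) (Fin n) ℝ) Γ := by
      rcases hor with h | h
      · exact LieSubalgebra.subset_lieSpan h
      · rw [Omega_symm b a]
        exact neg_mem (LieSubalgebra.subset_lieSpan h)
    by_cases hbc : b = c
    · subst hbc; exact hmem_ab
    · have hmem_bc := ih hbc
      rw [← Omega_bracket hne hbc hac]
      exact LieSubalgebra.lie_mem _ hmem_ab hmem_bc

theorem stmt13 {n : ℕ} (hn : 0 < n) (Γ : Set (Matrix (Fin n) (Fin n) ℝ))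
    (hΓ : Γ ⊆ {M | ∃ i j : Fin n, i < j ∧ M = Omega i j}) :
    ((LieSubalgebra.lieSpan ℝ (Matrix (Fin n) (Fin n) ℝ) Γ : Set (Matrix (Fin n) (Fin n) ℝ)) =
        {A : Matrix (Fin n) (Fin n) ℝ | Aᵀ = -A}) ↔
      (SimpleGraph.fromRel (fun i j : Fin n => Omega i j ∈ Γ)).Connected := by
  set G := SimpleGraph.fromRel (fun i j : Fin n => Omega i j ∈ Γ) with hG
  constructor
  · intro h
    haveI : Nonempty (Fin n) := ⟨⟨0, hn⟩⟩
    constructor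
    · intro i j
      by_contra hreach
      have hsub : Γ ⊆ (supportLie G : Set (Matrix (Fin n) (Fin n) ℝ)) := by
        intro M hM
        obtain ⟨a, b, hab, rfl⟩ := hΓ hM
        intro k l hkl
        have hadj : G.Adj a b := by
          rw [hG]
          exact (SimpleGraph.fromRel_adj _ _ _).mpr ⟨hab.ne, Or.inl hM⟩
        rw [Omega_apply]
        have h1 : ¬(a = k ∧ b = l) := fun ⟨e1, e2⟩ => hkl (e1 ▸ e2 ▸ hadj.reachable)
        have h2 : ¬(b = k ∧ a = l) := fun ⟨e1, e2⟩ => hkl (e1 ▸ e2 ▸ hadj.symm.reachable)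
        rw [if_neg h1, if_neg h2, sub_zero]
      have hle : LieSubalgebra.lieSpan ℝ (Matrix (Fin n) (Fin n) ℝ) Γ ≤ supportLie G :=
        (LieSubalgebra.lieSpan_le).mpr hsub
      have hmem : Omega i j ∈ {A : Matrix (Fin n) (Fin n) ℝ | Aᵀ = -A} := Omega_transpose i j
      rw [← h] at hmem
      have hT : Omega i j ∈ supportLie G := hle hmem
      have hz := hT i j hreach
      have hij : i ≠ j := fun e => hreach (e ▸ SimpleGraph.Reachable.refl i)
      rw [Omega_apply, if_pos ⟨rfl, rfl⟩, if_neg (fun ⟨e1, _⟩ => hij e1.symm), sub_zero] at hz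
      exact one_ne_zero hz
  · intro hconn
    apply Set.Subset.antisymm
    · have hle : LieSubalgebra.lieSpan ℝ (Matrix (Fin n) (Fin n) ℝ) Γ ≤ skewLie n :=
        (LieSubalgebra.lieSpan_le).mpr (by
          intro M hM
          obtain ⟨a, b, _, rfl⟩ := hΓ hM
          exact Omega_transpose a b)
      exact fun x hx => hle hx
    · intro A hA
      have hA' : Aᵀ = -A := hA
      have key : ∀ i j : Fin n, Omega i j ∈ LieSubalgebra.lieSpan ℝ (Matrix (Fin n) (Fin n) ℝ) Γ := by
        intro i j
        by_cases hij : i = j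
        · subst hij; rw [Omega_self]; exact zero_mem _
        · obtain ⟨w⟩ := hconn.preconnected i j
          exact mem_of_walk w hij
      show A ∈ LieSubalgebra.lieSpan ℝ (Matrix (Fin n) (Fin n) ℝ) Γ
      rw [skew_eq_sum A hA']
      exact sum_mem fun i _ => sum_mem fun j _ => (LieSubalgebra.lieSpan ℝ (Matrix (Fin n) (Fin n) ℝ) Γ).smul_mem _ (key i j)
end

section
/- If Γ ⊆ {Ω_ij : 1 ≤ i < j ≤ n} generates so(n) as a Lie algebra, then |Γ| ≥ n − 1. -/
open Matrix
attribute [local instance 100] LieRing.ofAssociativeRing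

/-- Matrices supported on a transitive relation form a Lie subalgebra. -/
def entrySub {n : ℕ} (R : Fin n → Fin n → Prop)
    (htrans : ∀ i j k, R i j → R j k → R i k) :
    LieSubalgebra ℝ (Matrix (Fin n) (Fin n) ℝ) where
  carrier := {A | ∀ p q, ¬ R p q → A p q = 0}
  add_mem' := fun {A B} hA hB p q h => by
    simp [Matrix.add_apply, hA p q h, hB p q h]
  zero_mem' := fun p q h => rfl
  smul_mem' := fun c A hA p q h => by
    simp [Matrix.smul_apply, hA p q h]
  lie_mem' := fun {A B} hA hB p q h => by
    have key : ∀ (X Y : Matrix (Fin n) (Fin n) ℝ),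
        (∀ p q, ¬ R p q → X p q = 0) → (∀ p q, ¬ R p q → Y p q = 0) →
        (X * Y) p q = 0 := by
      intro X Y hX hY
      rw [Matrix.mul_apply]
      refine Finset.sum_eq_zero fun k _ => ?_
      by_cases hk : R p k
      · have hkq : ¬ R k q := fun hkq => h (htrans _ _ _ hk hkq)
        rw [hY k q hkq, mul_zero]
      · rw [hX p k hk, zero_mul]
    show (⁅A, B⁆ : Matrix (Fin n) (Fin n) ℝ) p q = 0
    rw [Ring.lie_def, Matrix.sub_apply, key A B hA hB, key B A hB hA, sub_zero]

theorem stmt15 {n : ℕ} (Γ : Finset (Matrix (Fin n) (Fin n) ℝ))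
    (hΓ : ∀ M ∈ Γ, ∃ i j : Fin n, i < j ∧ M = Omega i j)
    (hgen : (LieSubalgebra.lieSpan ℝ (Matrix (Fin n) (Fin n) ℝ)
        (Γ : Set (Matrix (Fin n) (Fin n) ℝ)) : Set (Matrix (Fin n) (Fin n) ℝ)) =
      {A : Matrix (Fin n) (Fin n) ℝ | Aᵀ = -A}) :
    n - 1 ≤ Γ.card := by
  classical
  rcases Nat.eq_zero_or_pos n with h0 | hn
  · simp [h0]
  set e : Fin n → (Fin n → ℝ) := fun i => Pi.single i 1 with he
  set W : Submodule ℝ (Fin n → ℝ) :=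
    Submodule.span ℝ ((Γ.image (fun M => M *ᵥ (fun _ => (1:ℝ)))) : Set (Fin n → ℝ)) with hW
  have hmul : ∀ i j : Fin n, (Omega i j) *ᵥ (fun _ => (1:ℝ)) = e i - e j := by
    intro i j
    rw [Omega, Matrix.sub_mulVec, Matrix.single_mulVec, Matrix.single_mulVec]
    funext k
    simp [he, Function.update_apply, Pi.single_apply]
  have htrans : ∀ i j k : Fin n, (e i - e j ∈ W) → (e j - e k ∈ W) → e i - e k ∈ W := by
    intro i j k h1 h2
    have := W.add_mem h1 h2
    simpa [sub_add_sub_cancel] using this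
  set S := entrySub (fun i j => e i - e j ∈ W) htrans with hS
  have hΓS : (Γ : Set (Matrix (Fin n) (Fin n) ℝ)) ⊆ S := by
    intro M hM
    obtain ⟨i, j, hij, rfl⟩ := hΓ M hM
    have hRij : e i - e j ∈ W := by
      rw [← hmul i j]
      exact Submodule.subset_span (by
        simp only [Finset.coe_image, Set.mem_image, Finset.mem_coe]
        exact ⟨_, hM, rfl⟩)
    have hRji : e j - e i ∈ W := by
      have := W.neg_mem hRij; rwa [neg_sub] at this
    intro p q hpq
    show Omega i j p q = 0
    by_cases h1 : i = p ∧ j = q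
    · exact absurd (h1.1 ▸ h1.2 ▸ hRij) hpq
    by_cases h2 : j = p ∧ i = q
    · exact absurd (h2.1 ▸ h2.2 ▸ hRji) hpq
    · rw [Omega, Matrix.sub_apply, Matrix.single_apply_of_ne _ _ _ _ _ h1,
        Matrix.single_apply_of_ne _ _ _ _ _ h2, sub_zero]
  have hspan : LieSubalgebra.lieSpan ℝ (Matrix (Fin n) (Fin n) ℝ)
      (Γ : Set (Matrix (Fin n) (Fin n) ℝ)) ≤ S := (LieSubalgebra.lieSpan_le).mpr hΓS
  set z : Fin n := ⟨0, hn⟩ with hz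
  have hR0 : ∀ j : Fin n, e z - e j ∈ W := by
    intro j
    by_cases hj : j = z
    · subst hj; simp only [sub_self]; exact W.zero_mem
    · have hskew : (Omega z j)ᵀ = -(Omega z j) := by
        ext p q
        simp [Omega, Matrix.transpose_apply, Matrix.sub_apply, Matrix.neg_apply,
          single, and_comm]
      have hmem : Omega z j ∈ LieSubalgebra.lieSpan ℝ (Matrix (Fin n) (Fin n) ℝ)
          (Γ : Set (Matrix (Fin n) (Fin n) ℝ)) := by
        have : Omega z j ∈ (LieSubalgebra.lieSpan ℝ (Matrix (Fin n) (Fin n) ℝ)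
            (Γ : Set (Matrix (Fin n) (Fin n) ℝ)) : Set (Matrix (Fin n) (Fin n) ℝ)) := by
          rw [hgen]; exact hskew
        exact this
      have hSm := hspan hmem
      by_contra hR
      have h0 := hSm z j hR
      have hne : ¬ (j = z ∧ z = j) := fun hc => hj hc.1
      rw [Omega, Matrix.sub_apply, Matrix.single_apply_same,
        Matrix.single_apply_of_ne _ _ _ _ _ hne] at h0
      norm_num at h0
  have htop : W ⊔ Submodule.span ℝ {e z} = ⊤ := by
    rw [eq_top_iff, ← (Pi.basisFun ℝ (Fin n)).span_eq, Submodule.span_le]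
    rintro x ⟨j, rfl⟩
    rw [Pi.basisFun_apply]
    have hx : (Pi.single j 1 : Fin n → ℝ) = e z - (e z - e j) := by
      simp [he]
    rw [hx]
    exact Submodule.sub_mem _
      (Submodule.mem_sup_right (Submodule.subset_span (Set.mem_singleton _)))
      (Submodule.mem_sup_left (hR0 j))
  have hWle : Module.finrank ℝ W ≤ Γ.card := by
    refine le_trans ?_ (Finset.card_image_le (f := fun M => M *ᵥ (fun _ => (1:ℝ))))
    exact finrank_span_finset_le_card _
  have hez : e z ≠ 0 := by
    intro hcon
    have := congrFun hcon z
    simp [he] at this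
  have h1le : Module.finrank ℝ (Submodule.span ℝ {e z}) = 1 :=
    finrank_span_singleton hez
  have hsum : Module.finrank ℝ (⊤ : Submodule ℝ (Fin n → ℝ)) ≤ Γ.card + 1 := by
    rw [← htop]
    refine le_trans (Submodule.finrank_add_le_finrank_add_finrank _ _) ?_
    rw [h1le]
    omega
  rw [finrank_top, Module.finrank_pi] at hsum
  simp only [Fintype.card_fin] at hsum
  omega
end
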